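/- In the three-player one-shot game where only player 1 moves, choosing between two actions a and b, with payoff vectors u(a) = (1,2,0) and u(b) = (1,0,2) to players 1, 2, 3 respectively: both strategy profiles (the one choosing a and the one choosing b) are secure equilibria, but the game has no strongly secure equilibrium. -/

import Mathlib

/-- The three players of the example game. -/
inductive ExPlayer : Type
  | one
  | two
  | three
deriving DecidableEq

instance : Fintype ExPlayer :=
  ⟨{ExPlayer.one, ExPlayer.two, ExPlayer.three}, fun x => by cases x <;> simp⟩

/-- Strategy sets: player 1 chooses between two actions (`Bool`, where `true` is
action `a` and `false` is action `b`); players 2 and 3 never move, so they have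
singleton strategy sets. -/
def ExStrat : ExPlayer → Type
  | .one => Bool
  | .two => PUnit
  | .three => PUnit

/-- Payoffs: if player 1 chooses `a` (`true`) the payoffs to players 1, 2, 3 are
`(1, 2, 0)`; if player 1 chooses `b` (`false`) they are `(1, 0, 2)`. -/
def exPay : ExPlayer → (∀ j, ExStrat j) → ℝ :=
  fun i σ =>
    match i, (σ ExPlayer.one : Bool) with
    | .one, _ => 1
    | .two, true => 2
    | .two, false => 0
    | .three, true => 0
    | .three, false => 2

/-- The strategy profile in which player 1 chooses action `a`. -/
def exProfA : ∀ j, ExStrat j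
  | .one => true
  | .two => PUnit.unit
  | .three => PUnit.unit

/-- The strategy profile in which player 1 chooses action `b`. -/
def exProfB : ∀ j, ExStrat j
  | .one => false
  | .two => PUnit.unit
  | .three => PUnit.unit

/-- Nash equilibrium in the example game. -/
def ExNash (σ : ∀ j, ExStrat j) : Prop :=
  ∀ (i : ExPlayer) (τi : ExStrat i), exPay i (Function.update σ i τi) ≤ exPay i σ

/-- Secure equilibrium in the example game. -/
def ExSecure (σ : ∀ j, ExStrat j) : Prop :=
  ExNash σ ∧
    ¬ ∃ (i : ExPlayer) (τi : ExStrat i),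
        exPay i (Function.update σ i τi) = exPay i σ ∧
        (∀ j : ExPlayer, j ≠ i → exPay j (Function.update σ i τi) ≤ exPay j σ) ∧
        (∃ k : ExPlayer, k ≠ i ∧ exPay k (Function.update σ i τi) < exPay k σ)

/-- Strongly secure equilibrium in the example game. -/
def ExStronglySecure (σ : ∀ j, ExStrat j) : Prop :=
  ExNash σ ∧
    ∀ (i : ExPlayer) (τi : ExStrat i),
      exPay i (Function.update σ i τi) = exPay i σ →
      ∀ j : ExPlayer, j ≠ i → exPay j σ ≤ exPay j (Function.update σ i τi)

lemma exPay_congr (i : ExPlayer) (σ σ' : ∀ j, ExStrat j)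
    (h : σ ExPlayer.one = σ' ExPlayer.one) : exPay i σ = exPay i σ' := by
  cases i <;> simp only [exPay, h]

lemma upd_one (σ : ∀ j, ExStrat j) (b : Bool) :
    Function.update σ ExPlayer.one b ExPlayer.one = b :=
  Function.update_self _ _ _

lemma upd_two (σ : ∀ j, ExStrat j) (τ : ExStrat ExPlayer.two) :
    Function.update σ ExPlayer.two τ ExPlayer.one = σ ExPlayer.one :=
  Function.update_of_ne (by decide) _ _

lemma upd_three (σ : ∀ j, ExStrat j) (τ : ExStrat ExPlayer.three) :
    Function.update σ ExPlayer.three τ ExPlayer.one = σ ExPlayer.one :=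
  Function.update_of_ne (by decide) _ _

lemma exNash_any (σ : ∀ j, ExStrat j) : ExNash σ := by
  intro i τi
  cases i with
  | one =>
    simp only [exPay]; exact le_refl 1
  | two =>
    rw [exPay_congr _ _ σ (upd_two σ τi)]
  | three =>
    rw [exPay_congr _ _ σ (upd_three σ τi)]

lemma exSecure_any (σ : ∀ j, ExStrat j) : ExSecure σ := by
  refine ⟨exNash_any σ, ?_⟩
  rintro ⟨i, τi, -, h2, k, hk, h3⟩
  cases i with
  | one =>
    cases hb : σ ExPlayer.one <;> cases hτ : τi <;>
    · have h2' := h2 ExPlayer.two (by decide)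
      have h2'' := h2 ExPlayer.three (by decide)
      have hk2 := hk
      cases k <;>
        simp_all [exPay, upd_one] <;> linarith
  | two =>
    have := exPay_congr k _ σ (upd_two σ τi)
    rw [this] at h3
    exact lt_irrefl _ h3
  | three =>
    have := exPay_congr k _ σ (upd_three σ τi)
    rw [this] at h3
    exact lt_irrefl _ h3

lemma not_ss (σ : ∀ j, ExStrat j) : ¬ ExStronglySecure σ := by
  rintro ⟨-, h⟩
  cases hb : σ ExPlayer.one
  · have := h ExPlayer.one true (by simp [exPay]) ExPlayer.three (by decide)
    simp [exPay, upd_one, hb] at this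
    linarith
  · have := h ExPlayer.one false (by simp [exPay]) ExPlayer.two (by decide)
    simp [exPay, upd_one, hb] at this
    linarith

/-- **A game with secure equilibria but no strongly secure equilibrium**
(Remark 1): in the three-player one-shot game where only player 1 moves, with
payoff vectors `(1,2,0)` for action `a` and `(1,0,2)` for action `b`, both
strategy profiles are secure equilibria, but the game admits no strongly secure
equilibrium. -/
theorem example_secure_but_no_strongly_secure :
    ExSecure exProfA ∧ ExSecure exProfB ∧ ¬ ∃ σ : ∀ j, ExStrat j, ExStronglySecure σ := by
  exact ⟨exSecure_any _, exSecure_any _, fun ⟨σ, h⟩ => not_ss σ h⟩
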